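/- For smooth vector fields u on a domain in R^3 and a smooth velocity field β, the magnetic advection operator L_β u = -β × (∇ × u) + ∇(β · u) and its formal dual 𝓛_β u = ∇ × (β × u) - β (∇ · u) satisfy the pointwise identity L_β u + 𝓛_β u = -(∇·β) u + (∇β + (∇β)^T) u. -/

import Mathlib

open Matrix

/-- Gradient of a scalar field on `ℝ³`. -/
noncomputable def vgrad (f : (Fin 3 → ℝ) → ℝ) (x : Fin 3 → ℝ) : Fin 3 → ℝ :=
  fun i => fderiv ℝ f x (Pi.single i 1)

/-- Curl of a vector field on `ℝ³`. -/
noncomputable def vcurl (F : (Fin 3 → ℝ) → (Fin 3 → ℝ)) (x : Fin 3 → ℝ) : Fin 3 → ℝ :=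
  ![fderiv ℝ F x (Pi.single 1 1) 2 - fderiv ℝ F x (Pi.single 2 1) 1,
    fderiv ℝ F x (Pi.single 2 1) 0 - fderiv ℝ F x (Pi.single 0 1) 2,
    fderiv ℝ F x (Pi.single 0 1) 1 - fderiv ℝ F x (Pi.single 1 1) 0]

/-- Divergence of a vector field on `ℝ³`. -/
noncomputable def vdiv (F : (Fin 3 → ℝ) → (Fin 3 → ℝ)) (x : Fin 3 → ℝ) : ℝ :=
  ∑ j, fderiv ℝ F x (Pi.single j 1) j

/-- Jacobian matrix `(∇F)_{ij} = ∂_j F_i` of a vector field on `ℝ³`. -/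
noncomputable def vjac (F : (Fin 3 → ℝ) → (Fin 3 → ℝ)) (x : Fin 3 → ℝ) :
    Matrix (Fin 3) (Fin 3) ℝ :=
  Matrix.of fun i j => fderiv ℝ F x (Pi.single j 1) i

/-- The magnetic advection operator `L_β u = -β × (∇×u) + ∇(β·u)`. -/
noncomputable def magAdv (β u : (Fin 3 → ℝ) → (Fin 3 → ℝ)) (x : Fin 3 → ℝ) : Fin 3 → ℝ :=
  -((β x) ⨯₃ (vcurl u x)) + vgrad (fun y => β y ⬝ᵥ u y) x

/-- The formal dual operator `𝓛_β u = ∇ × (β × u) - β (∇·u)`. -/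
noncomputable def magAdvDual (β u : (Fin 3 → ℝ) → (Fin 3 → ℝ)) (x : Fin 3 → ℝ) : Fin 3 → ℝ :=
  vcurl (fun y => (β y) ⨯₃ (u y)) x - (vdiv u x) • β x

/-- Index a Fréchet derivative of a vector field. -/
lemma fd_index {F : (Fin 3 → ℝ) → Fin 3 → ℝ} {x : Fin 3 → ℝ}
    (hF : DifferentiableAt ℝ F x) (v : Fin 3 → ℝ) (i : Fin 3) :
    fderiv ℝ F x v i = fderiv ℝ (fun y => F y i) x v := by
  have h := ((ContinuousLinearMap.proj (R := ℝ) (φ := fun _ : Fin 3 => ℝ)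
      i).hasFDerivAt).comp x hF.hasFDerivAt
  have h2 : HasFDerivAt (fun y => F y i)
      ((ContinuousLinearMap.proj i).comp (fderiv ℝ F x)) x := h
  rw [h2.fderiv]; rfl

/-- for `C¹` fields `u` and `β` on an open set `Ω ⊆ ℝ³`, the pointwise
identity `L_β u + 𝓛_β u = -(∇·β) u + (∇β + (∇β)ᵀ) u` holds on `Ω`. -/
theorem stmt_0 (Ω : Set (Fin 3 → ℝ)) (hΩ : IsOpen Ω)
    (u β : (Fin 3 → ℝ) → (Fin 3 → ℝ))
    (hu : ContDiffOn ℝ 1 u Ω) (hβ : ContDiffOn ℝ 1 β Ω) :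
    ∀ x ∈ Ω,
      magAdv β u x + magAdvDual β u x =
        -(vdiv β x) • u x + (vjac β x + (vjac β x)ᵀ).mulVec (u x) := by
  intro x hx
  have hxn : Ω ∈ nhds x := hΩ.mem_nhds hx
  have hud : DifferentiableAt ℝ u x :=
    ((hu.differentiableOn one_ne_zero) x hx).differentiableAt hxn
  have hβd : DifferentiableAt ℝ β x :=
    ((hβ.differentiableOn one_ne_zero) x hx).differentiableAt hxn
  have hui : ∀ i, DifferentiableAt ℝ (fun y => u y i) x := fun i =>
    differentiableAt_pi.mp hud i
  have hβi : ∀ i, DifferentiableAt ℝ (fun y => β y i) x := fun i =>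
    differentiableAt_pi.mp hβd i
  -- product rule for components
  have hmul : ∀ (i j : Fin 3) (v : Fin 3 → ℝ),
      fderiv ℝ (fun y => β y i * u y j) x v =
        β x i * fderiv ℝ u x v j + u x j * fderiv ℝ β x v i := by
    intro i j v
    rw [fderiv_fun_mul (hβi i) (hui j)]
    simp only [ContinuousLinearMap.add_apply, ContinuousLinearMap.smul_apply, smul_eq_mul,
      ← fd_index hud, ← fd_index hβd]
  -- derivative of the dot product
  have hdotfun : (fun y => β y ⬝ᵥ u y) =
      fun y => β y 0 * u y 0 + (β y 1 * u y 1 + β y 2 * u y 2) := by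
    funext y; simp [dotProduct, Fin.sum_univ_three]; ring
  have hdot : ∀ v : Fin 3 → ℝ,
      fderiv ℝ (fun y => β y ⬝ᵥ u y) x v =
        (β x 0 * fderiv ℝ u x v 0 + u x 0 * fderiv ℝ β x v 0) +
        (β x 1 * fderiv ℝ u x v 1 + u x 1 * fderiv ℝ β x v 1) +
        (β x 2 * fderiv ℝ u x v 2 + u x 2 * fderiv ℝ β x v 2) := by
    intro v
    rw [hdotfun, fderiv_fun_add ((hβi 0).fun_mul (hui 0))
      (((hβi 1).fun_mul (hui 1)).fun_add ((hβi 2).fun_mul (hui 2))),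
      ]
    simp only [ContinuousLinearMap.add_apply]
    rw [fderiv_fun_add ((hβi 1).fun_mul (hui 1)) ((hβi 2).fun_mul (hui 2))]
    simp only [ContinuousLinearMap.add_apply, hmul]
    ring
  -- the cross product field and its components
  have hc0 : (fun y => (β y ⨯₃ u y) 0) = fun y => β y 1 * u y 2 - β y 2 * u y 1 := by
    funext y; simp [crossProduct]
  have hc1 : (fun y => (β y ⨯₃ u y) 1) = fun y => β y 2 * u y 0 - β y 0 * u y 2 := by
    funext y; simp [crossProduct]
  have hc2 : (fun y => (β y ⨯₃ u y) 2) = fun y => β y 0 * u y 1 - β y 1 * u y 0 := by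
    funext y; simp [crossProduct]
  have hd0 : DifferentiableAt ℝ (fun y => (β y ⨯₃ u y) 0) x := by
    rw [hc0]; exact ((hβi 1).mul (hui 2)).sub ((hβi 2).mul (hui 1))
  have hd1 : DifferentiableAt ℝ (fun y => (β y ⨯₃ u y) 1) x := by
    rw [hc1]; exact ((hβi 2).mul (hui 0)).sub ((hβi 0).mul (hui 2))
  have hd2 : DifferentiableAt ℝ (fun y => (β y ⨯₃ u y) 2) x := by
    rw [hc2]; exact ((hβi 0).mul (hui 1)).sub ((hβi 1).mul (hui 0))
  have hcd : DifferentiableAt ℝ (fun y => β y ⨯₃ u y) x := by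
    apply differentiableAt_pi.mpr
    intro i
    match i with
    | ⟨0, _⟩ => exact hd0
    | ⟨1, _⟩ => exact hd1
    | ⟨2, _⟩ => exact hd2
  have hX0 : ∀ v : Fin 3 → ℝ, fderiv ℝ (fun y => β y ⨯₃ u y) x v 0 =
      (β x 1 * fderiv ℝ u x v 2 + u x 2 * fderiv ℝ β x v 1) -
      (β x 2 * fderiv ℝ u x v 1 + u x 1 * fderiv ℝ β x v 2) := by
    intro v
    rw [fd_index hcd, hc0, fderiv_fun_sub ((hβi 1).fun_mul (hui 2)) ((hβi 2).fun_mul (hui 1))]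
    simp only [ContinuousLinearMap.sub_apply, hmul]
  have hX1 : ∀ v : Fin 3 → ℝ, fderiv ℝ (fun y => β y ⨯₃ u y) x v 1 =
      (β x 2 * fderiv ℝ u x v 0 + u x 0 * fderiv ℝ β x v 2) -
      (β x 0 * fderiv ℝ u x v 2 + u x 2 * fderiv ℝ β x v 0) := by
    intro v
    rw [fd_index hcd, hc1, fderiv_fun_sub ((hβi 2).fun_mul (hui 0)) ((hβi 0).fun_mul (hui 2))]
    simp only [ContinuousLinearMap.sub_apply, hmul]
  have hX2 : ∀ v : Fin 3 → ℝ, fderiv ℝ (fun y => β y ⨯₃ u y) x v 2 =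
      (β x 0 * fderiv ℝ u x v 1 + u x 1 * fderiv ℝ β x v 0) -
      (β x 1 * fderiv ℝ u x v 0 + u x 0 * fderiv ℝ β x v 1) := by
    intro v
    rw [fd_index hcd, hc2, fderiv_fun_sub ((hβi 0).fun_mul (hui 1)) ((hβi 1).fun_mul (hui 0))]
    simp only [ContinuousLinearMap.sub_apply, hmul]
  have hgrad : vgrad (fun y => β y ⬝ᵥ u y) x = fun i =>
      (β x 0 * fderiv ℝ u x (Pi.single i 1) 0 + u x 0 * fderiv ℝ β x (Pi.single i 1) 0) +
      (β x 1 * fderiv ℝ u x (Pi.single i 1) 1 + u x 1 * fderiv ℝ β x (Pi.single i 1) 1) +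
      (β x 2 * fderiv ℝ u x (Pi.single i 1) 2 + u x 2 * fderiv ℝ β x (Pi.single i 1) 2) :=
    funext fun i => hdot _
  have hcurlcross : vcurl (fun y => β y ⨯₃ u y) x =
      ![((β x 0 * fderiv ℝ u x (Pi.single 1 1) 1 + u x 1 * fderiv ℝ β x (Pi.single 1 1) 0)
          - (β x 1 * fderiv ℝ u x (Pi.single 1 1) 0 + u x 0 * fderiv ℝ β x (Pi.single 1 1) 1))
        - ((β x 2 * fderiv ℝ u x (Pi.single 2 1) 0 + u x 0 * fderiv ℝ β x (Pi.single 2 1) 2)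
          - (β x 0 * fderiv ℝ u x (Pi.single 2 1) 2 + u x 2 * fderiv ℝ β x (Pi.single 2 1) 0)),
        ((β x 1 * fderiv ℝ u x (Pi.single 2 1) 2 + u x 2 * fderiv ℝ β x (Pi.single 2 1) 1)
          - (β x 2 * fderiv ℝ u x (Pi.single 2 1) 1 + u x 1 * fderiv ℝ β x (Pi.single 2 1) 2))
        - ((β x 0 * fderiv ℝ u x (Pi.single 0 1) 1 + u x 1 * fderiv ℝ β x (Pi.single 0 1) 0)
          - (β x 1 * fderiv ℝ u x (Pi.single 0 1) 0 + u x 0 * fderiv ℝ β x (Pi.single 0 1) 1)),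
        ((β x 2 * fderiv ℝ u x (Pi.single 0 1) 0 + u x 0 * fderiv ℝ β x (Pi.single 0 1) 2)
          - (β x 0 * fderiv ℝ u x (Pi.single 0 1) 2 + u x 2 * fderiv ℝ β x (Pi.single 0 1) 0))
        - ((β x 1 * fderiv ℝ u x (Pi.single 1 1) 2 + u x 2 * fderiv ℝ β x (Pi.single 1 1) 1)
          - (β x 2 * fderiv ℝ u x (Pi.single 1 1) 1 + u x 1 * fderiv ℝ β x (Pi.single 1 1) 2))] := by
    simp only [vcurl, hX0, hX1, hX2]
  have hcv : ∀ a b : Fin 3 → ℝ, a ⨯₃ b =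
      ![a 1 * b 2 - a 2 * b 1, a 2 * b 0 - a 0 * b 2, a 0 * b 1 - a 1 * b 0] := by
    intro a b; simp [crossProduct]
  funext i
  fin_cases i <;>
  · simp only [magAdv, magAdvDual, hgrad, hcurlcross, Pi.add_apply, Pi.sub_apply,
      Pi.neg_apply, Pi.smul_apply, smul_eq_mul]
    simp [hcv, vcurl, vdiv, vjac, Matrix.mulVec, dotProduct, Fin.sum_univ_three,
      Matrix.add_apply, Matrix.transpose_apply]
    ring
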